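/- Let F be a field with char F ≠ 2, 3, and let A be the 2-dimensional algebra with products e1·e1 = α1·e1 + e2, e1·e2 = (2α1−1)·e2, e2·e1 = (1−α1)·e2, e2·e2 = 0, where α1 ∈ F. Then the derivations of A are exactly the maps e1 ↦ c·e2, e2 ↦ 0 for c ∈ F; in particular Der(A) is 1-dimensional and abelian. -/

import Mathlib

/-- Bilinear multiplication on `Fin 2 → F` determined by the four products
`e1·e1 = p11`, `e1·e2 = p12`, `e2·e1 = p21`, `e2·e2 = p22` of basis vectors. -/
def mul2 {F : Type*} [Field F] (p11 p12 p21 p22 : Fin 2 → F) (u v : Fin 2 → F) : Fin 2 → F :=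
  (u 0 * v 0) • p11 + (u 0 * v 1) • p12 + (u 1 * v 0) • p21 + (u 1 * v 1) • p22

theorem stmt14 {F : Type*} [Field F] (h2 : (2 : F) ≠ 0) (h3 : (3 : F) ≠ 0) (α1 : F)
    (mul : (Fin 2 → F) → (Fin 2 → F) → (Fin 2 → F))
    (hmul : mul = mul2 ![α1, 1] ![0, 2 * α1 - 1] ![0, 1 - α1] ![0, 0]) :
    ∀ d : (Fin 2 → F) →ₗ[F] (Fin 2 → F), (∀ u v, d (mul u v) = mul (d u) v + mul u (d v)) ↔ (∃ c : F, d ![1, 0] = ![0, c] ∧ d ![0, 1] = 0) := by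
  subst hmul
  intro d
  have hbasis : ∀ w : Fin 2 → F, w = w 0 • ![(1:F), 0] + w 1 • ![0, 1] := by
    intro w; funext i; fin_cases i <;> simp
  have hd : ∀ w : Fin 2 → F, d w = w 0 • d ![1, 0] + w 1 • d ![0, 1] := by
    intro w
    conv_lhs => rw [hbasis w]
    rw [map_add, map_smul, map_smul]
  constructor
  · intro h
    set a := d ![(1:F), 0] 0 with ha
    set b := d ![(1:F), 0] 1 with hb
    set c := d ![(0:F), 1] 0 with hc
    set e := d ![(0:F), 1] 1 with he
    have H11 := h ![1, 0] ![1, 0]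
    have H12 := h ![1, 0] ![0, 1]
    have H21 := h ![0, 1] ![1, 0]
    rw [hd] at H11 H12 H21
    conv_rhs at H11 => rw [hd ![(1:F),0]]
    conv_rhs at H12 => rw [hd ![(1:F),0], hd ![(0:F),1]]
    conv_rhs at H21 => rw [hd ![(1:F),0], hd ![(0:F),1]]
    -- component equations
    have E10 := congrFun H11 0
    have E11 := congrFun H11 1
    have E20 := congrFun H12 0
    have E21 := congrFun H12 1
    have E30 := congrFun H21 0
    have E31 := congrFun H21 1
    simp [mul2, ← ha, ← hb, ← hc, ← he] at E10 E11 E20 E21 E30 E31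
    -- solve: a = 0, c = 0, e = 0
    have hA : a = 0 := by linear_combination -E10 - E31
    have hC : c = 0 := by linear_combination E10 + α1 * hA
    have hE : e = 0 := by linear_combination E11 + 2 * hA
    refine ⟨b, ?_, ?_⟩
    · funext i; fin_cases i
      · simpa using hA
      · simp [hb]
    · funext i; fin_cases i
      · simpa using hC
      · simpa using hE
  · rintro ⟨c, h1, h0⟩
    intro u v
    have key : ∀ w : Fin 2 → F, d w = ![0, w 0 * c] := by
      intro w
      rw [hd, h1, h0]
      funext i; fin_cases i <;> simp [mul_comm]
    rw [key, key, key]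
    funext i; fin_cases i <;> simp [mul2] <;> ring
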